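/- Let $a, b, c \in \mathbb{R}[u]$ be polynomials with $\gcd(a,c)=1$ and $\gcd(b,c)=1$, not all zero. Then the syzygy module $Z = \{(A,B,C) \in \mathbb{R}[u]^3 : Aa + Bb + Cc = 0\}$ is a free $\mathbb{R}[u]$-module of rank $2$. -/

import Mathlib

open Polynomial

/-- The linear map `(A,B,C) ↦ A*a + B*b + C*c` whose kernel is the syzygy module. -/
noncomputable def syzMap (a b c : ℝ[X]) :
    (ℝ[X] × ℝ[X] × ℝ[X]) →ₗ[ℝ[X]] ℝ[X] where
  toFun x := x.1 * a + x.2.1 * b + x.2.2 * c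
  map_add' x y := by
    simp only [Prod.fst_add, Prod.snd_add]
    ring
  map_smul' m x := by
    simp only [Prod.smul_fst, Prod.smul_snd, smul_eq_mul, RingHom.id_apply]
    ring

/-- The syzygy module `Z = {(A,B,C) : Aa + Bb + Cc = 0}` of three real polynomials with
`gcd(a,c) = gcd(b,c) = 1`, not all zero, is a free `ℝ[u]`-module of rank 2. -/
theorem syz_free_rank_two (a b c : ℝ[X])
    (hac : IsCoprime a c) (hbc : IsCoprime b c)
    (hne : ¬(a = 0 ∧ b = 0 ∧ c = 0)) :
    Module.Free ℝ[X] ↥(LinearMap.ker (syzMap a b c)) ∧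
      Module.rank ℝ[X] ↥(LinearMap.ker (syzMap a b c)) = 2 := by
  classical
  set f := syzMap a b c with hfdef
  obtain ⟨x, y, hxy⟩ := hac
  -- a section of f
  let s : ℝ[X] →ₗ[ℝ[X]] (ℝ[X] × ℝ[X] × ℝ[X]) :=
    { toFun := fun p => (x * p, 0, y * p)
      map_add' := by intro p q; simp [mul_add, Prod.ext_iff]
      map_smul' := by
        intro m p
        simp only [smul_eq_mul, RingHom.id_apply, Prod.smul_mk, Prod.ext_iff]
        refine ⟨by ring, by simp, by ring⟩ }
  have hsec : ∀ p : ℝ[X], f (s p) = p := by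
    intro p
    show x * p * a + 0 * b + y * p * c = p
    linear_combination p * hxy
  -- freeness: the kernel is a submodule of a finite free module over a PID
  let b1 : Module.Basis Unit ℝ[X] ℝ[X] := Module.Basis.singleton Unit ℝ[X]
  let bM : Module.Basis ((Unit ⊕ Unit) ⊕ Unit) ℝ[X] (ℝ[X] × ℝ[X] × ℝ[X]) :=
    ((b1.prod b1).prod b1).map (LinearEquiv.prodAssoc ℝ[X] ℝ[X] ℝ[X] ℝ[X])
  obtain ⟨n, bk⟩ := Submodule.basisOfPid bM (LinearMap.ker f)
  have hfree : Module.Free ℝ[X] ↥(LinearMap.ker f) := Module.Free.of_basis bk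
  refine ⟨hfree, ?_⟩
  haveI := hfree
  -- splitting: (ℝ[X])³ ≃ ker f × ℝ[X]
  let e : (ℝ[X] × ℝ[X] × ℝ[X]) ≃ₗ[ℝ[X]] (↥(LinearMap.ker f) × ℝ[X]) :=
    { toFun := fun v => (⟨v - s (f v), by simp [LinearMap.mem_ker, map_sub, hsec]⟩, f v)
      invFun := fun kp => (kp.1 : ℝ[X] × ℝ[X] × ℝ[X]) + s kp.2
      map_add' := by
        intro v w
        refine Prod.ext (Subtype.ext ?_) (map_add f v w)
        show (v + w) - s (f (v + w)) = (v - s (f v)) + (w - s (f w))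
        rw [map_add, map_add]; abel
      map_smul' := by
        intro m v
        refine Prod.ext (Subtype.ext ?_) (map_smul f m v)
        show (m • v) - s (f (m • v)) = m • (v - s (f v))
        rw [map_smul, map_smul, smul_sub]
      left_inv := by intro v; simp
      right_inv := by
        rintro ⟨⟨k, hk⟩, p⟩
        have hk' : f k = 0 := hk
        simp [hk', hsec] }
  have h3 : Module.rank ℝ[X] (ℝ[X] × ℝ[X] × ℝ[X]) = 3 := by
    rw [rank_prod', rank_prod', Module.rank_self]
    norm_num
  have h2 : Module.rank ℝ[X] (ℝ[X] × ℝ[X] × ℝ[X])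
      = Module.rank ℝ[X] ↥(LinearMap.ker f) + 1 := by
    rw [e.rank_eq, rank_prod', Module.rank_self]
  have hrank : Module.rank ℝ[X] ↥(LinearMap.ker f) = (n : Cardinal) := by
    rw [rank_eq_card_basis bk]; simp
  rw [h3, hrank] at h2
  have : ((3 : ℕ) : Cardinal) = ((n + 1 : ℕ) : Cardinal) := by push_cast; rw [h2]
  have hn : n = 2 := by
    have := Nat.cast_inj.mp this
    omega
  rw [hrank, hn]
  norm_num
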